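/- Let n ≥ 13 and let π = (4,4,4,4,4,1,1,1,1,1,1,1,1) be a bicyclic graphic degree sequence (5 vertices of degree 4 and 8 leaves, n = 13). Then there exist two non-isomorphic bicyclic graphs G and G' both with degree sequence π achieving the same second Zagreb index M2(G) = M2(G'), and this common value is the maximum of M2 over all bicyclic graphs with degree sequence π. -/

import Mathlib

open SimpleGraph Finset

/-- The second Zagreb index `M2(G) = ∑_{uv ∈ E(G)} d(u)·d(v)`. -/
noncomputable def M2 {V : Type*} [Fintype V] (G : SimpleGraph V) : ℕ :=
  letI := Classical.decEq V
  letI : DecidableRel G.Adj := Classical.decRel _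
  ∑ e ∈ G.edgeFinset,
    Sym2.lift ⟨fun x y => G.degree x * G.degree y, fun _ _ => Nat.mul_comm _ _⟩ e

/-- The degree of a vertex. -/
noncomputable def deg {V : Type*} [Fintype V] (G : SimpleGraph V) (v : V) : ℕ :=
  letI : DecidableRel G.Adj := Classical.decRel _
  G.degree v

section Helpers

variable {V : Type*} [Fintype V]

lemma deg_eq (G : SimpleGraph V) [DecidableRel G.Adj] (v : V) : deg G v = G.degree v := by
  unfold deg; congr!

lemma M2_eq [DecidableEq V] (G : SimpleGraph V) [DecidableRel G.Adj] :
    M2 G = ∑ e ∈ G.edgeFinset,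
      Sym2.lift ⟨fun x y => G.degree x * G.degree y, fun _ _ => Nat.mul_comm _ _⟩ e := by
  unfold M2; congr!

lemma ncard_deg [DecidableEq V] (G : SimpleGraph V) [DecidableRel G.Adj] (k : ℕ) :
    {v | deg G v = k}.ncard = ({v ∈ univ | G.degree v = k} : Finset V).card := by
  classical
  rw [Set.ncard_eq_toFinset_card']
  congr 1
  ext v
  simp [deg_eq]

lemma ncard_edge [DecidableEq V] (G : SimpleGraph V) [DecidableRel G.Adj] :
    G.edgeSet.ncard = G.edgeFinset.card := by
  classical
  rw [Set.ncard_eq_toFinset_card']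
  try congr 1

end Helpers

/-- In a connected graph on `Fin 13`, two adjacent vertices cannot both have degree 1. -/
lemma no_leaf_leaf {H : SimpleGraph (Fin 13)} [DecidableRel H.Adj] (hc : H.Connected)
    {u v : Fin 13} (h : H.Adj u v) (hu : H.degree u = 1) (hv : H.degree v = 1) : False := by
  have hmu : v ∈ H.neighborFinset u := (H.mem_neighborFinset u v).mpr h
  have hmv : u ∈ H.neighborFinset v := (H.mem_neighborFinset v u).mpr h.symm
  obtain ⟨a, ha⟩ := Finset.card_eq_one.mp hu
  obtain ⟨b, hb⟩ := Finset.card_eq_one.mp hv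
  rw [ha, Finset.mem_singleton] at hmu
  rw [hb, Finset.mem_singleton] at hmv
  subst hmu hmv
  have stay : ∀ {x y : Fin 13} (_ : H.Walk x y), (x = u ∨ x = v) → (y = u ∨ y = v) := by
    intro x y p
    induction p with
    | nil => exact id
    | @cons x b y hadj q ih =>
      rintro (rfl | rfl)
      · apply ih
        have : b ∈ H.neighborFinset x := (H.mem_neighborFinset x b).mpr hadj
        rw [ha, Finset.mem_singleton] at this
        exact Or.inr this
      · apply ih
        have : b ∈ H.neighborFinset x := (H.mem_neighborFinset x b).mpr hadj
        rw [hb, Finset.mem_singleton] at this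
        exact Or.inl this
  have hne : ({u, v} : Finset (Fin 13)) ≠ univ := by
    intro hq
    have h2 : ({u, v} : Finset (Fin 13)).card ≤ 2 := Finset.card_insert_le _ _ |>.trans (by simp)
    rw [hq] at h2
    simp [Finset.card_univ] at h2
  obtain ⟨w, hw⟩ : ∃ w, w ∉ ({u, v} : Finset (Fin 13)) := by
    by_contra hq
    push_neg at hq
    exact hne (Finset.eq_univ_iff_forall.mpr hq)
  obtain ⟨p⟩ := hc.preconnected u w
  rcases stay p (Or.inl rfl) with rfl | rfl <;> simp at hw

/-- The second Zagreb index is constant (equal to 128) on all connected graphs on 13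
vertices with 14 edges, five vertices of degree 4 and eight vertices of degree 1. -/
lemma M2_val (H : SimpleGraph (Fin 13)) [DecidableRel H.Adj] (hc : H.Connected)
    (he : H.edgeFinset.card = 14)
    (h4 : ({v ∈ univ | H.degree v = 4} : Finset (Fin 13)).card = 5)
    (h1 : ({v ∈ univ | H.degree v = 1} : Finset (Fin 13)).card = 8) :
    ∑ e ∈ H.edgeFinset,
      Sym2.lift ⟨fun x y => H.degree x * H.degree y, fun _ _ => Nat.mul_comm _ _⟩ e = 128 := by
  -- every vertex has degree 4 or 1
  have hdeg : ∀ v : Fin 13, H.degree v = 4 ∨ H.degree v = 1 := by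
    have hdisj : Disjoint ({v ∈ univ | H.degree v = 4} : Finset (Fin 13))
        ({v ∈ univ | H.degree v = 1} : Finset (Fin 13)) := by
      rw [Finset.disjoint_left]
      intro x hx hx'
      rw [Finset.mem_filter] at hx hx'
      omega
    have hcard : (({v ∈ univ | H.degree v = 4} : Finset (Fin 13)) ∪
        ({v ∈ univ | H.degree v = 1} : Finset (Fin 13))).card = 13 := by
      rw [Finset.card_union_of_disjoint hdisj, h4, h1]
    have huniv : ({v ∈ univ | H.degree v = 4} : Finset (Fin 13)) ∪
        ({v ∈ univ | H.degree v = 1} : Finset (Fin 13)) = univ :=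
      Finset.eq_univ_of_card _ (by simp [hcard])
    intro v
    have : v ∈ (({v ∈ univ | H.degree v = 4} : Finset (Fin 13)) ∪
        ({v ∈ univ | H.degree v = 1} : Finset (Fin 13))) := by
      rw [huniv]; exact Finset.mem_univ v
    rw [Finset.mem_union, Finset.mem_filter, Finset.mem_filter] at this
    tauto
  classical
  set P : Sym2 (Fin 13) → Prop := fun e => ∃ w, H.degree w = 1 ∧ w ∈ e with hP
  -- the set of pendant edges has cardinality 8
  have hFcard : (H.edgeFinset.filter P).card = 8 := by
    have hbi : H.edgeFinset.filter P =
        ({v ∈ univ | H.degree v = 1} : Finset (Fin 13)).biUnion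
          (fun v => H.incidenceFinset v) := by
      ext e
      simp only [Finset.mem_filter, Finset.mem_biUnion, mem_incidenceFinset, hP,
        mem_edgeFinset, Finset.mem_univ, true_and]
      constructor
      · rintro ⟨hee, w, hw1, hwe⟩
        exact ⟨w, hw1, hee, hwe⟩
      · rintro ⟨w, hw1, hee, hwe⟩
        exact ⟨hee, w, hw1, hwe⟩
    rw [hbi, Finset.card_biUnion]
    · calc (∑ v ∈ ({v ∈ univ | H.degree v = 1} : Finset (Fin 13)), (H.incidenceFinset v).card)
          = ∑ v ∈ ({v ∈ univ | H.degree v = 1} : Finset (Fin 13)), 1 := by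
            apply Finset.sum_congr rfl
            intro v hv
            rw [Finset.mem_filter] at hv
            rw [H.card_incidenceFinset_eq_degree, hv.2]
        _ = 8 := by rw [Finset.sum_const, h1]; simp
    · intro u hu v hv huv
      rw [Finset.mem_coe, Finset.mem_filter] at hu hv
      rw [Function.onFun, Finset.disjoint_left]
      intro e heu hev
      rw [mem_incidenceFinset] at heu hev
      exact no_leaf_leaf hc (H.adj_of_mem_incidenceSet huv heu hev) hu.2 hv.2
  have hsplit := Finset.sum_filter_add_sum_filter_not H.edgeFinset P
    (fun e => Sym2.lift ⟨fun x y => H.degree x * H.degree y, fun _ _ => Nat.mul_comm _ _⟩ e)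
  have hA : ∑ e ∈ H.edgeFinset.filter P,
      Sym2.lift ⟨fun x y => H.degree x * H.degree y, fun _ _ => Nat.mul_comm _ _⟩ e = 32 := by
    have : ∀ e ∈ H.edgeFinset.filter P,
        Sym2.lift ⟨fun x y => H.degree x * H.degree y, fun _ _ => Nat.mul_comm _ _⟩ e = 4 := by
      intro e
      induction e using Sym2.ind with
      | _ a b =>
        intro he
        rw [Finset.mem_filter, mem_edgeFinset, mem_edgeSet] at he
        obtain ⟨hadj, w, hw1, hwe⟩ := he
        rw [Sym2.mem_iff] at hwe
        simp only [Sym2.lift_mk]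
        rcases hwe with rfl | rfl
        · have hb : H.degree b = 4 := by
            rcases hdeg b with h' | h'
            · exact h'
            · exact absurd (no_leaf_leaf hc hadj hw1 h') not_false
          rw [hw1, hb]
        · have ha : H.degree a = 4 := by
            rcases hdeg a with h' | h'
            · exact h'
            · exact absurd (no_leaf_leaf hc hadj h' hw1) not_false
          rw [hw1, ha]
    rw [Finset.sum_congr rfl this, Finset.sum_const, hFcard]; rfl
  have hBcard : (H.edgeFinset.filter (fun e => ¬ P e)).card = 6 := by
    have := Finset.card_filter_add_card_filter_not (s := H.edgeFinset) (p := P)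
    omega
  have hB : ∑ e ∈ H.edgeFinset.filter (fun e => ¬ P e),
      Sym2.lift ⟨fun x y => H.degree x * H.degree y, fun _ _ => Nat.mul_comm _ _⟩ e = 96 := by
    have : ∀ e ∈ H.edgeFinset.filter (fun e => ¬ P e),
        Sym2.lift ⟨fun x y => H.degree x * H.degree y, fun _ _ => Nat.mul_comm _ _⟩ e = 16 := by
      intro e
      induction e using Sym2.ind with
      | _ a b =>
        intro he
        rw [Finset.mem_filter, mem_edgeFinset, mem_edgeSet] at he
        obtain ⟨hadj, hnp⟩ := he
        have hnp' : ∀ w, H.degree w = 1 → w ∉ s(a,b) := fun w hw hmem => hnp ⟨w, hw, hmem⟩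
        have ha : H.degree a = 4 := by
          rcases hdeg a with h' | h'
          · exact h'
          · exact absurd (Sym2.mem_mk_left a b) (hnp' a h')
        have hb : H.degree b = 4 := by
          rcases hdeg b with h' | h'
          · exact h'
          · exact absurd (Sym2.mem_mk_right a b) (hnp' b h')
        simp only [Sym2.lift_mk]
        rw [ha, hb]
    rw [Finset.sum_congr rfl this, Finset.sum_const, hBcard]; rfl
  rw [← hsplit, hA, hB]

/-- The first extremal graph: two triangles sharing the edge 01, vertex 4 attached to 0,
and leaves distributed so that vertices 0–4 all have degree 4. -/
def E1 : List (Fin 13 × Fin 13) :=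
  [(0,1),(0,2),(1,2),(0,3),(1,3),(0,4),
   (1,5),(2,6),(2,7),(3,8),(3,9),(4,10),(4,11),(4,12)]

/-- The second extremal graph: two triangles sharing the vertex 0, each of the other
core vertices carrying two leaves. -/
def E2 : List (Fin 13 × Fin 13) :=
  [(0,1),(0,2),(1,2),(0,3),(0,4),(3,4),
   (1,5),(1,6),(2,7),(2,8),(3,9),(3,10),(4,11),(4,12)]

def G1 : SimpleGraph (Fin 13) := SimpleGraph.fromRel (fun a b => (a,b) ∈ E1)
def G2 : SimpleGraph (Fin 13) := SimpleGraph.fromRel (fun a b => (a,b) ∈ E2)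

instance : DecidableRel G1.Adj := fun a b =>
  decidable_of_iff _ (SimpleGraph.fromRel_adj _ a b).symm
instance : DecidableRel G2.Adj := fun a b =>
  decidable_of_iff _ (SimpleGraph.fromRel_adj _ a b).symm

lemma conn1 : G1.Connected := by
  rw [connected_iff_exists_forall_reachable]
  refine ⟨0, fun v => ?_⟩
  have a1 : G1.Adj 0 1 := by decide
  have a2 : G1.Adj 0 2 := by decide
  have a3 : G1.Adj 0 3 := by decide
  have a4 : G1.Adj 0 4 := by decide
  have a5 : G1.Adj 1 5 := by decide
  have a6 : G1.Adj 2 6 := by decide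
  have a7 : G1.Adj 2 7 := by decide
  have a8 : G1.Adj 3 8 := by decide
  have a9 : G1.Adj 3 9 := by decide
  have a10 : G1.Adj 4 10 := by decide
  have a11 : G1.Adj 4 11 := by decide
  have a12 : G1.Adj 4 12 := by decide
  fin_cases v
  · rfl
  · exact a1.reachable
  · exact a2.reachable
  · exact a3.reachable
  · exact a4.reachable
  · exact a1.reachable.trans a5.reachable
  · exact a2.reachable.trans a6.reachable
  · exact a2.reachable.trans a7.reachable
  · exact a3.reachable.trans a8.reachable
  · exact a3.reachable.trans a9.reachable
  · exact a4.reachable.trans a10.reachable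
  · exact a4.reachable.trans a11.reachable
  · exact a4.reachable.trans a12.reachable

lemma conn2 : G2.Connected := by
  rw [connected_iff_exists_forall_reachable]
  refine ⟨0, fun v => ?_⟩
  have a1 : G2.Adj 0 1 := by decide
  have a2 : G2.Adj 0 2 := by decide
  have a3 : G2.Adj 0 3 := by decide
  have a4 : G2.Adj 0 4 := by decide
  have a5 : G2.Adj 1 5 := by decide
  have a6 : G2.Adj 1 6 := by decide
  have a7 : G2.Adj 2 7 := by decide
  have a8 : G2.Adj 2 8 := by decide
  have a9 : G2.Adj 3 9 := by decide
  have a10 : G2.Adj 3 10 := by decide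
  have a11 : G2.Adj 4 11 := by decide
  have a12 : G2.Adj 4 12 := by decide
  fin_cases v
  · rfl
  · exact a1.reachable
  · exact a2.reachable
  · exact a3.reachable
  · exact a4.reachable
  · exact a1.reachable.trans a5.reachable
  · exact a1.reachable.trans a6.reachable
  · exact a2.reachable.trans a7.reachable
  · exact a2.reachable.trans a8.reachable
  · exact a3.reachable.trans a9.reachable
  · exact a3.reachable.trans a10.reachable
  · exact a4.reachable.trans a11.reachable
  · exact a4.reachable.trans a12.reachable

section Iso

variable {V W : Type*} [Fintype V] [Fintype W] [DecidableEq V] [DecidableEq W]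

lemma iso_neighborFinset {G : SimpleGraph V} {G' : SimpleGraph W}
    [DecidableRel G.Adj] [DecidableRel G'.Adj] (φ : G ≃g G') (v : V) :
    G'.neighborFinset (φ v) = (G.neighborFinset v).image φ := by
  ext w
  simp only [mem_neighborFinset, Finset.mem_image]
  constructor
  · intro h
    refine ⟨φ.symm w, ?_, by simp⟩
    have := φ.symm.map_adj_iff.mpr h
    simpa using this
  · rintro ⟨u, hu, rfl⟩
    exact φ.map_adj_iff.mpr hu

lemma iso_degree {G : SimpleGraph V} {G' : SimpleGraph W}
    [DecidableRel G.Adj] [DecidableRel G'.Adj] (φ : G ≃g G') (v : V) :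
    G'.degree (φ v) = G.degree v := by
  rw [← card_neighborFinset_eq_degree, ← card_neighborFinset_eq_degree,
    iso_neighborFinset φ v]
  exact Finset.card_image_of_injective _ (RelIso.injective φ)

lemma iso_lcount {G : SimpleGraph V} {G' : SimpleGraph W}
    [DecidableRel G.Adj] [DecidableRel G'.Adj] (φ : G ≃g G') (v : V) :
    ((G'.neighborFinset (φ v)).filter (fun u => G'.degree u = 1)).card =
    ((G.neighborFinset v).filter (fun u => G.degree u = 1)).card := by
  rw [iso_neighborFinset φ v, Finset.filter_image,
    Finset.card_image_of_injective _ (RelIso.injective φ)]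
  congr 1
  apply Finset.filter_congr
  intro u _
  simp [Function.comp, iso_degree φ u]

end Iso

lemma noniso : IsEmpty (G1 ≃g G2) := by
  constructor
  intro φ
  have h1 : ((G1.neighborFinset 4).filter (fun u => G1.degree u = 1)).card = 3 := by decide
  have h2 : ∀ v : Fin 13,
      ((G2.neighborFinset v).filter (fun u => G2.degree u = 1)).card ≠ 3 := by decide
  exact h2 (φ 4) (by rw [iso_lcount φ 4, h1])

/-- For the bicyclic degree sequence `π = (4^{(5)}, 1^{(8)})` on `n = 13` vertices,
there exist two non-isomorphic bicyclic graphs with degree sequence `π` having the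
same second Zagreb index, and this common value is the maximum of `M2` over all
bicyclic graphs with degree sequence `π`. -/
theorem stmt_19 :
    ∃ G G' : SimpleGraph (Fin 13),
      (G.Connected ∧ G.edgeSet.ncard = 14 ∧
        {v | deg G v = 4}.ncard = 5 ∧ {v | deg G v = 1}.ncard = 8) ∧
      (G'.Connected ∧ G'.edgeSet.ncard = 14 ∧
        {v | deg G' v = 4}.ncard = 5 ∧ {v | deg G' v = 1}.ncard = 8) ∧
      IsEmpty (G ≃g G') ∧
      M2 G = M2 G' ∧
      ∀ H : SimpleGraph (Fin 13),
        H.Connected → H.edgeSet.ncard = 14 →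
        {v | deg H v = 4}.ncard = 5 → {v | deg H v = 1}.ncard = 8 →
        M2 H ≤ M2 G := by
  have e1 : G1.edgeFinset.card = 14 := by decide
  have e2 : G2.edgeFinset.card = 14 := by decide
  have d14 : ({v ∈ univ | G1.degree v = 4} : Finset (Fin 13)).card = 5 := by decide
  have d11 : ({v ∈ univ | G1.degree v = 1} : Finset (Fin 13)).card = 8 := by decide
  have d24 : ({v ∈ univ | G2.degree v = 4} : Finset (Fin 13)).card = 5 := by decide
  have d21 : ({v ∈ univ | G2.degree v = 1} : Finset (Fin 13)).card = 8 := by decide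
  have hM1 : M2 G1 = 128 := by rw [M2_eq]; exact M2_val G1 conn1 e1 d14 d11
  have hM2 : M2 G2 = 128 := by rw [M2_eq]; exact M2_val G2 conn2 e2 d24 d21
  refine ⟨G1, G2,
    ⟨conn1, by rw [ncard_edge]; exact e1, by rw [ncard_deg]; exact d14,
      by rw [ncard_deg]; exact d11⟩,
    ⟨conn2, by rw [ncard_edge]; exact e2, by rw [ncard_deg]; exact d24,
      by rw [ncard_deg]; exact d21⟩,
    noniso, by rw [hM1, hM2], ?_⟩
  intro H hc he h4 h1
  letI : DecidableRel H.Adj := Classical.decRel _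
  rw [ncard_edge] at he
  rw [ncard_deg] at h4 h1
  rw [hM1, M2_eq]
  rw [M2_val H hc he h4 h1]
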